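/- Let β, σ_d, K > 0 and P̄ ≥ 0. Then σ^L_{P̄} ≤ σ^U_{P̄}, where σ^L_{P̄} = β + P̄σ_d/K + βW₀(−e^{−P̄σ_d/(Kβ)−1}) and σ^U_{P̄} = β + σ_d + P̄σ_d/K + βW₀(−((β+σ_d)/β)e^{−(K(β+σ_d)+P̄σ_d)/(Kβ)}). -/

import Mathlib

lemma aux_mono_stmt14 : StrictMonoOn (fun u : ℝ => u * Real.exp u) (Set.Ici (-1 : ℝ)) := by
  apply strictMonoOn_of_deriv_pos (convex_Ici _)
  · exact Continuous.continuousOn (by continuity)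
  · intro x hx
    rw [interior_Ici] at hx
    have h : HasDerivAt (fun u : ℝ => u * Real.exp u) (1 * Real.exp x + x * Real.exp x) x :=
      (hasDerivAt_id x).mul (Real.hasDerivAt_exp x)
    rw [h.deriv]
    have : (-1 : ℝ) < x := hx
    nlinarith [Real.exp_pos x]

/-- `σ^L_{P̄} ≤ σ^U_{P̄}` for the Lambert-W expressions bounding the time to accumulate
an average of `P̄` droplets over `K` servers. -/
theorem stmt_14 (β σd K P : ℝ) (hβ : 0 < β) (hσd : 0 < σd) (hK : 0 < K) (hP : 0 ≤ P)
    (W : ℝ → ℝ)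
    (hW : ∀ x : ℝ, -Real.exp (-1) ≤ x → (-1 ≤ W x ∧ W x * Real.exp (W x) = x)) :
    β + P * σd / K + β * W (-Real.exp (-(P * σd / (K * β)) - 1))
      ≤ β + σd + P * σd / K
          + β * W (-((β + σd) / β) * Real.exp (-(K * (β + σd) + P * σd) / (K * β))) := by
  set c : ℝ := P * σd / (K * β) with hcdef
  set t : ℝ := (β + σd) / β with htdef
  have hc0 : 0 ≤ c := by positivity
  have ht1 : 1 < t := by
    rw [htdef, lt_div_iff₀ hβ]; linarith
  have hx1def : -(K * (β + σd) + P * σd) / (K * β) = -(t + c) := by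
    field_simp [htdef, hcdef]
    rw [htdef, hcdef]; field_simp [hβ.ne', hK.ne']
  set x₁ : ℝ := -Real.exp (-(P * σd / (K * β)) - 1) with hx1
  set x₂ : ℝ := -((β + σd) / β) * Real.exp (-(K * (β + σd) + P * σd) / (K * β)) with hx2
  have hx2' : x₂ = -(t * Real.exp (-(t + c))) := by
    rw [hx2, hx1def, htdef]; ring
  have hb1 : -Real.exp (-1) ≤ x₁ := by
    rw [hx1, neg_le_neg_iff]
    exact Real.exp_le_exp.mpr (by linarith)
  have h12 : x₁ ≤ x₂ := by
    rw [hx1, hx2', neg_le_neg_iff]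
    have ht : t * Real.exp (-t) ≤ Real.exp (-1) := by
      have h := Real.add_one_le_exp (t - 1)
      have hne : Real.exp (-t) > 0 := Real.exp_pos _
      calc t * Real.exp (-t) ≤ Real.exp (t - 1) * Real.exp (-t) := by nlinarith
        _ = Real.exp (-1) := by rw [← Real.exp_add]; ring_nf
    calc t * Real.exp (-(t + c)) = t * Real.exp (-t) * Real.exp (-c) := by
          rw [mul_assoc, ← Real.exp_add]; ring_nf
      _ ≤ Real.exp (-1) * Real.exp (-c) := by
          nlinarith [Real.exp_pos (-c)]
      _ = Real.exp (-c - 1) := by rw [← Real.exp_add]; ring_nf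
      _ = Real.exp (-(P * σd / (K * β)) - 1) := by rw [hcdef]
  have hb2 : -Real.exp (-1) ≤ x₂ := le_trans hb1 h12
  obtain ⟨ha1, ha2⟩ := hW x₁ hb1
  obtain ⟨hb1', hb2'⟩ := hW x₂ hb2
  have hab : W x₁ ≤ W x₂ := by
    have := (aux_mono_stmt14.le_iff_le (a := W x₁) (b := W x₂) ha1 hb1').mp
    apply this
    simp only [ha2, hb2']
    exact h12
  have : β * W x₁ ≤ β * W x₂ := mul_le_mul_of_nonneg_left hab hβ.le
  linarith
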